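/- arXiv:1803.02151 — 2 statements merged into one kernel-verified Lean document; each statement's English description precedes it below -/
import Mathlib

section
/- Let (Ω₁×Ω₂, 𝒢, P₁⊗P₂) be a product probability space, Ω' a separable metric space with its Borel σ-algebra, Xⁿ : Ω₁×Ω₂ → Ω' and Yⁿ : Ω₂ → Ω' random variables. Suppose Yⁿ converges in distribution under P₂ to Y, and for every bounded continuous F : Ω' → ℝ, E₁[F(Xⁿ)] → E[F(X)] holds P₂-almost surely (where E₁ is expectation over Ω₁ only). Then the pair (Xⁿ, Yⁿ) converges in distribution under P₁⊗P₂ to (X, Y) with X and Y independent. -/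
open scoped NNReal ENNReal
open MeasureTheory ProbabilityTheory Filter Topology BoundedContinuousFunction Set Metric

lemma lipint {Ω' : Type*} [MetricSpace Ω'] [TopologicalSpace.SeparableSpace Ω']
    [MeasurableSpace Ω'] [BorelSpace Ω'] {α : Type*} [MeasurableSpace α] (μ : Measure α) [IsProbabilityMeasure μ]
    (x : α → Ω') (hx : Measurable x) (H : (Ω' × Ω') →ᵇ ℝ) {K : ℝ≥0}
    (hL : LipschitzWith K H) (y y' : Ω') :
    |(∫ a, H (x a, y) ∂μ) - ∫ a, H (x a, y') ∂μ| ≤ K * dist y y' := by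
  haveI : SecondCountableTopology Ω' := UniformSpace.secondCountable_of_separable Ω'
  have hmeas : ∀ z : Ω', Measurable fun a => H (x a, z) := fun z =>
    H.continuous.measurable.comp (hx.prodMk measurable_const)
  have hint : ∀ z : Ω', Integrable (fun a => H (x a, z)) μ := fun z =>
    ⟨(hmeas z).aestronglyMeasurable,
      HasFiniteIntegral.of_bounded (C := ‖H‖) (ae_of_all _ fun a => H.norm_coe_le_norm _)⟩
  rw [← integral_sub (hint y) (hint y')]
  calc |∫ a, (H (x a, y) - H (x a, y')) ∂μ|
      ≤ ∫ a, |H (x a, y) - H (x a, y')| ∂μ := by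
        simpa [Real.norm_eq_abs] using
          norm_integral_le_integral_norm (fun a => H (x a, y) - H (x a, y')) (μ := μ)
    _ ≤ ∫ _a, (K : ℝ) * dist y y' ∂μ := by
        refine integral_mono ((hint y).sub (hint y')).abs (integrable_const _) fun a => ?_
        have := hL.dist_le_mul (x a, y) (x a, y')
        rw [Real.dist_eq] at this
        refine this.trans ?_
        have : dist ((x a, y) : Ω' × Ω') (x a, y') = dist y y' := by
          rw [Prod.dist_eq]; simp [dist_self, max_eq_right dist_nonneg]
        rw [this]
    _ = (K : ℝ) * dist y y' := by simp

theorem stepA {Ω' : Type*} [MetricSpace Ω'] [TopologicalSpace.SeparableSpace Ω']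
    [MeasurableSpace Ω'] [BorelSpace Ω'] {Ω₁ Ω₂ : Type*} [MeasurableSpace Ω₁] [MeasurableSpace Ω₂]
    (P₁ : Measure Ω₁) (P₂ : Measure Ω₂) [IsProbabilityMeasure P₁] [IsProbabilityMeasure P₂]
    (X : ℕ → Ω₁ × Ω₂ → Ω') (Y : ℕ → Ω₂ → Ω')
    (hX : ∀ n, Measurable (X n)) (hY : ∀ n, Measurable (Y n))
    (μX μY : Measure Ω') [IsProbabilityMeasure μX] [IsProbabilityMeasure μY]
    (hYconv : ∀ G : Ω' →ᵇ ℝ,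
      Tendsto (fun n => ∫ ω₂, G (Y n ω₂) ∂P₂) atTop (𝓝 (∫ y, G y ∂μY)))
    (hXconv : ∀ F : Ω' →ᵇ ℝ, ∀ᵐ ω₂ ∂P₂,
      Tendsto (fun n => ∫ ω₁, F (X n (ω₁, ω₂)) ∂P₁) atTop (𝓝 (∫ x, F x ∂μX)))
    (H : (Ω' × Ω') →ᵇ ℝ) {K : ℝ≥0} (hL : LipschitzWith K H) :
    Tendsto (fun n => ∫ ω, H (X n ω, Y n ω.2) ∂(P₁.prod P₂)) atTop
      (𝓝 (∫ p, H p ∂(μX.prod μY))) := by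
  haveI : SecondCountableTopology Ω' := UniformSpace.secondCountable_of_separable Ω'
  have hΩ' : Nonempty Ω' := by
    by_contra h
    rw [not_nonempty_iff] at h
    have h1 : μX univ = 1 := measure_univ
    rw [Set.univ_eq_empty_iff.mpr h, measure_empty] at h1
    exact zero_ne_one h1
  -- basic measurability and integrability
  have measHn : ∀ n, StronglyMeasurable (fun ω : Ω₁ × Ω₂ => H (X n ω, Y n ω.2)) := fun n =>
    (H.continuous.measurable.comp ((hX n).prodMk ((hY n).comp measurable_snd))).stronglyMeasurable
  have intHn : ∀ n, Integrable (fun ω : Ω₁ × Ω₂ => H (X n ω, Y n ω.2)) (P₁.prod P₂) := fun n =>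
    ⟨(measHn n).aestronglyMeasurable,
      HasFiniteIntegral.of_bounded (C := ‖H‖) (ae_of_all _ fun ω => H.norm_coe_le_norm _)⟩
  have fub : ∀ n, ∫ ω, H (X n ω, Y n ω.2) ∂(P₁.prod P₂)
      = ∫ ω₂, ∫ ω₁, H (X n (ω₁, ω₂), Y n ω₂) ∂P₁ ∂P₂ := fun n =>
    integral_prod_symm _ (intHn n)
  -- the function g
  set g : Ω' → ℝ := fun y => ∫ x, H (x, y) ∂μX with hg
  have hgK : LipschitzWith K g :=
    LipschitzWith.of_dist_le_mul fun y y' => by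
      rw [Real.dist_eq]
      exact lipint μX id measurable_id H hL y y'
  have hgbd : ∀ y, ‖g y‖ ≤ ‖H‖ := fun y => by
    simpa using norm_integral_le_of_norm_le_const (μ := μX)
      (ae_of_all _ fun x => H.norm_coe_le_norm (x, y))
  set G : Ω' →ᵇ ℝ := BoundedContinuousFunction.ofNormedAddCommGroup g hgK.continuous ‖H‖ hgbd
    with hG
  have hGg : ∀ y, G y = g y := fun y => rfl
  have hYG : Tendsto (fun n => ∫ ω₂, g (Y n ω₂) ∂P₂) atTop (𝓝 (∫ y, g y ∂μY)) := hYconv G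
  have hR : ∫ p, H p ∂(μX.prod μY) = ∫ y, g y ∂μY := integral_prod_symm _ (H.integrable _)
  -- the partial-integral functions Φ
  set Φ : ℕ → Ω₂ → ℝ := fun n ω₂ => ∫ ω₁, H (X n (ω₁, ω₂), Y n ω₂) ∂P₁ with hΦ
  have hΦm : ∀ n, StronglyMeasurable (Φ n) := fun n => (measHn n).integral_prod_left'
  have hΦbd : ∀ n ω₂, ‖Φ n ω₂‖ ≤ ‖H‖ := fun n ω₂ => by
    simpa using norm_integral_le_of_norm_le_const (μ := P₁)
      (ae_of_all _ fun ω₁ => H.norm_coe_le_norm (X n (ω₁, ω₂), Y n ω₂))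
  have intΦ : ∀ n, Integrable (Φ n) P₂ := fun n =>
    ⟨(hΦm n).aestronglyMeasurable,
      HasFiniteIntegral.of_bounded (C := ‖H‖) (ae_of_all _ (hΦbd n))⟩
  have intgY : ∀ n, Integrable (fun ω₂ => g (Y n ω₂)) P₂ := fun n =>
    ⟨(hgK.continuous.measurable.comp (hY n)).aestronglyMeasurable,
      HasFiniteIntegral.of_bounded (C := ‖H‖) (ae_of_all _ fun ω₂ => hgbd _)⟩
  -- the key convergence
  have key : Tendsto (fun n => ∫ ω₂, (Φ n ω₂ - g (Y n ω₂)) ∂P₂) atTop (𝓝 0) := by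
    rw [NormedAddCommGroup.tendsto_nhds_zero]
    intro ε hε
    have hden : (0:ℝ) < 2*(K:ℝ) + 2*‖H‖ + 3 := by positivity
    set ε' : ℝ := ε / (2*(K:ℝ) + 2*‖H‖ + 3) with hε'def
    have hε'pos : 0 < ε' := div_pos hε hden
    -- countable partition of Ω' into Borel sets of diameter ≤ ε'
    obtain ⟨xs, hxs⟩ := TopologicalSpace.exists_dense_seq Ω'
    set Bs : ℕ → Set Ω' := fun i => ball (xs i) (ε'/2) with hBs
    set As : ℕ → Set Ω' := disjointed Bs with hAs
    have hAsm : ∀ i, MeasurableSet (As i) :=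
      MeasurableSet.disjointed fun i => measurableSet_ball
    have hAsub : ∀ i, As i ⊆ Bs i := fun i => disjointed_subset Bs i
    have hcover : ∀ y : Ω', ∃ i, y ∈ Bs i := fun y => by
      obtain ⟨i, hi⟩ := hxs.exists_dist_lt y (half_pos hε'pos)
      exact ⟨i, mem_ball.mpr hi⟩
    have hpart : ∀ M : ℕ, (⋃ i ≤ M, As i) = ⋃ i ≤ M, Bs i := fun M => by
      have h1 : partialSups As M = partialSups Bs M := by rw [hAs, partialSups_disjointed]
      rw [partialSups_eq_biSup, partialSups_eq_biSup] at h1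
      exact h1
    set UU : ℕ → Set Ω' := fun M => ⋃ i ≤ M, Bs i with hUU
    have hUopen : ∀ M, IsOpen (UU M) := fun M => isOpen_biUnion fun i _ => isOpen_ball
    have hUmono : Monotone UU := fun a b hab => by
      refine iUnion₂_subset fun i hi => ?_
      exact subset_iUnion₂ (s := fun i (_ : i ≤ b) => Bs i) i (hi.trans hab)
    have hUuniv : ⋃ M, UU M = univ := eq_univ_of_forall fun y => by
      obtain ⟨i, hi⟩ := hcover y
      exact mem_iUnion.mpr ⟨i, mem_iUnion₂.mpr ⟨i, le_rfl, hi⟩⟩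
    have hμYU : Tendsto (fun M => μY (UU M)) atTop (𝓝 1) := by
      have h2 := tendsto_measure_iUnion_atTop (μ := μY) hUmono
      rwa [hUuniv, measure_univ] at h2
    obtain ⟨N, hN⟩ : ∃ M, 1 - ENNReal.ofReal ε' < μY (UU M) := by
      have hlt : (1:ℝ≥0∞) - ENNReal.ofReal ε' < 1 :=
        ENNReal.sub_lt_self ENNReal.one_ne_top one_ne_zero
          (ENNReal.ofReal_pos.mpr hε'pos).ne'
      exact (hμYU.eventually (eventually_gt_nhds hlt)).exists
    -- convergence in distribution of the laws of the `Y n`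
    haveI hLawn : ∀ n, IsProbabilityMeasure (P₂.map (Y n)) := fun n =>
      Measure.isProbabilityMeasure_map (hY n).aemeasurable
    set vY : ℕ → ProbabilityMeasure Ω' := fun n => ⟨P₂.map (Y n), hLawn n⟩ with hvY
    have hvYconv : Tendsto vY atTop (𝓝 ⟨μY, inferInstance⟩) := by
      apply ProbabilityMeasure.tendsto_iff_forall_integral_tendsto.mpr
      intro f
      have hmap : ∀ n, ∫ x, f x ∂(P₂.map (Y n)) = ∫ ω₂, f (Y n ω₂) ∂P₂ := fun n =>
        integral_map (hY n).aemeasurable f.continuous.aestronglyMeasurable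
      show Tendsto (fun i => ∫ ω, f ω ∂(P₂.map (Y i))) atTop (𝓝 (∫ ω, f ω ∂μY))
      simpa only [hmap] using hYconv f
    have hopen := ProbabilityMeasure.le_liminf_measure_open_of_tendsto hvYconv (hUopen N)
    have hev : ∀ᶠ n in atTop, 1 - ENNReal.ofReal ε' < P₂ (Y n ⁻¹' UU N) := by
      have h2 : 1 - ENNReal.ofReal ε'
          < atTop.liminf (fun n => (vY n : Measure Ω') (UU N)) := lt_of_lt_of_le hN hopen
      refine (eventually_lt_of_lt_liminf h2).mono fun n hn => ?_
      rwa [show ((vY n : Measure Ω')) = P₂.map (Y n) from rfl,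
        Measure.map_apply (hY n) (hUopen N).measurableSet] at hn
    have hcompl : ∀ᶠ n in atTop, (P₂ ((Y n ⁻¹' UU N)ᶜ)).toReal ≤ ε' := by
      refine hev.mono fun n hn => ?_
      have hm : MeasurableSet (Y n ⁻¹' UU N) := hY n (hUopen N).measurableSet
      rw [prob_compl_eq_one_sub hm]
      have h4 : (1:ℝ≥0∞) - P₂ (Y n ⁻¹' UU N) ≤ ENNReal.ofReal ε' := by
        rw [tsub_le_iff_right]
        exact (tsub_le_iff_right.mp hn.le).trans_eq (add_comm _ _)
      calc ((1:ℝ≥0∞) - P₂ (Y n ⁻¹' UU N)).toReal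
          ≤ (ENNReal.ofReal ε').toReal := ENNReal.toReal_mono ENNReal.ofReal_ne_top h4
        _ = ε' := ENNReal.toReal_ofReal hε'pos.le
    -- choose representative points of the pieces
    have hycex : ∀ i, ∃ y : Ω', (As i).Nonempty → y ∈ As i := fun i => by
      by_cases h : (As i).Nonempty
      · exact ⟨h.choose, fun _ => h.choose_spec⟩
      · exact ⟨Classical.arbitrary Ω', fun hh => absurd hh h⟩
    choose yc hyc using hycex
    -- the deviation functions
    set d : ℕ → ℕ → Ω₂ → ℝ :=
      fun i n ω₂ => |(∫ ω₁, H (X n (ω₁, ω₂), yc i) ∂P₁) - g (yc i)| with hd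
    have hdm : ∀ i n, StronglyMeasurable (d i n) := fun i n => by
      have h1 : StronglyMeasurable (fun ω : Ω₁ × Ω₂ => H (X n ω, yc i)) :=
        (H.continuous.measurable.comp ((hX n).prodMk measurable_const)).stronglyMeasurable
      exact ((h1.integral_prod_left'.measurable.sub measurable_const).abs).stronglyMeasurable
    have habs2 : ∀ a b : ℝ, |a - b| ≤ |a| + |b| := fun a b => by
      rw [sub_eq_add_neg]
      exact (abs_add_le _ _).trans (by rw [abs_neg])
    have hdbd : ∀ i n ω₂, ‖d i n ω₂‖ ≤ 2*‖H‖ := fun i n ω₂ => by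
      rw [Real.norm_eq_abs, hd, abs_abs]
      have h1 : |∫ ω₁, H (X n (ω₁, ω₂), yc i) ∂P₁| ≤ ‖H‖ := by
        rw [← Real.norm_eq_abs]
        simpa using norm_integral_le_of_norm_le_const (μ := P₁)
          (ae_of_all _ fun ω₁ => H.norm_coe_le_norm (X n (ω₁, ω₂), yc i))
      have h2 := hgbd (yc i)
      rw [Real.norm_eq_abs] at h2
      calc |(∫ ω₁, H (X n (ω₁, ω₂), yc i) ∂P₁) - g (yc i)|
          ≤ |∫ ω₁, H (X n (ω₁, ω₂), yc i) ∂P₁| + |g (yc i)| := habs2 _ _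
        _ ≤ 2*‖H‖ := by linarith
    have hint_d : ∀ i n, Integrable (d i n) P₂ := fun i n =>
      ⟨(hdm i n).aestronglyMeasurable,
        HasFiniteIntegral.of_bounded (C := 2*‖H‖) (ae_of_all _ (hdbd i n))⟩
    have hdtend : ∀ i, Tendsto (fun n => ∫ ω₂, d i n ω₂ ∂P₂) atTop (𝓝 0) := fun i => by
      have hF := hXconv (H.compContinuous
        ⟨fun x => (x, yc i), continuous_id.prodMk continuous_const⟩)
      have hae : ∀ᵐ ω₂ ∂P₂, Tendsto (fun n => d i n ω₂) atTop (𝓝 0) := by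
        refine hF.mono fun ω₂ h => ?_
        have h2 : Tendsto (fun n => (∫ ω₁, H (X n (ω₁, ω₂), yc i) ∂P₁) - g (yc i)) atTop
            (𝓝 0) := by simpa [hg] using h.sub (tendsto_const_nhds (x := g (yc i)))
        simpa [hd] using h2.abs
      have h3 := tendsto_integral_of_dominated_convergence (μ := P₂)
        (F := fun n => d i n) (f := fun _ => (0:ℝ)) (bound := fun _ => 2*‖H‖)
        (fun n => (hdm i n).aestronglyMeasurable) (integrable_const _)
        (fun n => ae_of_all _ (hdbd i n)) hae
      simpa using h3
    have hsum : Tendsto (fun n => ∑ i ∈ Finset.range (N+1), ∫ ω₂, d i n ω₂ ∂P₂) atTop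
        (𝓝 0) := by
      have h2 := tendsto_finset_sum (Finset.range (N+1)) (fun i _ => hdtend i)
      simpa using h2
    have hev1 : ∀ᶠ n in atTop, ∑ i ∈ Finset.range (N+1), ∫ ω₂, d i n ω₂ ∂P₂ < ε' :=
      hsum.eventually (eventually_lt_nhds hε'pos)
    filter_upwards [hev1, hcompl] with n h1 h2
    rw [Real.norm_eq_abs]
    -- integrability of the dominating function
    have hUNm : MeasurableSet (Y n ⁻¹' UU N) := hY n (hUopen N).measurableSet
    have intind : ∀ i, Integrable ((Y n ⁻¹' As i).indicator (d i n)) P₂ := fun i =>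
      (hint_d i n).indicator (hY n (hAsm i))
    have intind2 : Integrable (((Y n ⁻¹' UU N)ᶜ).indicator (fun _ => (2*‖H‖ : ℝ))) P₂ :=
      (integrable_const _).indicator hUNm.compl
    set ρ : Ω₂ → ℝ := fun ω₂ => (∑ i ∈ Finset.range (N+1),
        (Y n ⁻¹' As i).indicator (d i n) ω₂) +
        (((Y n ⁻¹' UU N)ᶜ).indicator (fun _ => (2*‖H‖ : ℝ)) ω₂ + 2*(K:ℝ)*ε') with hρ
    have intρ : Integrable ρ P₂ := by
      apply Integrable.add
      · exact integrable_finset_sum _ (fun i _ => intind i)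
      · exact intind2.add (integrable_const _)
    -- the pointwise bound
    have hpt : ∀ ω₂, |Φ n ω₂ - g (Y n ω₂)| ≤ ρ ω₂ := by
      intro ω₂
      have hsum_nonneg : 0 ≤ ∑ i ∈ Finset.range (N+1),
          (Y n ⁻¹' As i).indicator (d i n) ω₂ :=
        Finset.sum_nonneg fun i _ => Set.indicator_nonneg (fun x _ => abs_nonneg _) _
      have hind2_nonneg : 0 ≤ ((Y n ⁻¹' UU N)ᶜ).indicator (fun _ => (2*‖H‖ : ℝ)) ω₂ :=
        Set.indicator_nonneg (fun x _ => by positivity) _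
      have h2Kε' : 0 ≤ 2*(K:ℝ)*ε' := by positivity
      by_cases hmem : Y n ω₂ ∈ UU N
      · have hmem' : Y n ω₂ ∈ ⋃ i ≤ N, As i := by rw [hpart N]; exact hmem
        obtain ⟨i, hiN, hiA⟩ := mem_iUnion₂.mp hmem'
        have hyci : yc i ∈ As i := hyc i ⟨_, hiA⟩
        have hdist : dist (Y n ω₂) (yc i) ≤ ε' := by
          have hb1 : dist (Y n ω₂) (xs i) < ε'/2 := mem_ball.mp (hAsub i hiA)
          have hb2 : dist (yc i) (xs i) < ε'/2 := mem_ball.mp (hAsub i hyci)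
          calc dist (Y n ω₂) (yc i) ≤ dist (Y n ω₂) (xs i) + dist (yc i) (xs i) :=
                dist_triangle_right _ _ _
            _ ≤ ε' := by linarith
        have e1 : |Φ n ω₂ - (∫ ω₁, H (X n (ω₁, ω₂), yc i) ∂P₁)| ≤ (K:ℝ) * ε' := by
          have h3 := lipint P₁ (fun ω₁ => X n (ω₁, ω₂))
            ((hX n).comp (measurable_id.prodMk measurable_const)) H hL (Y n ω₂) (yc i)
          refine h3.trans ?_
          exact mul_le_mul_of_nonneg_left hdist K.coe_nonneg
        have e3 : |g (yc i) - g (Y n ω₂)| ≤ (K:ℝ) * ε' := by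
          have h3 := lipint μX id measurable_id H hL (yc i) (Y n ω₂)
          refine h3.trans ?_
          rw [dist_comm]
          exact mul_le_mul_of_nonneg_left hdist K.coe_nonneg
        have hterm : d i n ω₂ ≤ ∑ j ∈ Finset.range (N+1),
            (Y n ⁻¹' As j).indicator (d j n) ω₂ := by
          have e2 : (Y n ⁻¹' As i).indicator (d i n) ω₂ = d i n ω₂ :=
            Set.indicator_of_mem (show ω₂ ∈ Y n ⁻¹' As i from hiA) _
          rw [← e2]
          exact Finset.single_le_sum
            (f := fun j => (Y n ⁻¹' As j).indicator (d j n) ω₂)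
            (fun j _ => Set.indicator_nonneg (fun x _ => abs_nonneg _) _)
            (Finset.mem_range.mpr (Nat.lt_succ_of_le hiN))
        have habs : |Φ n ω₂ - g (Y n ω₂)| ≤ (K:ℝ)*ε' + d i n ω₂ + (K:ℝ)*ε' := by
          have decomp : Φ n ω₂ - g (Y n ω₂)
              = (Φ n ω₂ - ∫ ω₁, H (X n (ω₁, ω₂), yc i) ∂P₁)
              + ((∫ ω₁, H (X n (ω₁, ω₂), yc i) ∂P₁) - g (yc i))
              + (g (yc i) - g (Y n ω₂)) := by ring
          rw [decomp]
          have t1 := (abs_add_le ((Φ n ω₂ - ∫ ω₁, H (X n (ω₁, ω₂), yc i) ∂P₁)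
              + ((∫ ω₁, H (X n (ω₁, ω₂), yc i) ∂P₁) - g (yc i))) (g (yc i) - g (Y n ω₂)))
          have t2 := abs_add_le (Φ n ω₂ - ∫ ω₁, H (X n (ω₁, ω₂), yc i) ∂P₁)
              ((∫ ω₁, H (X n (ω₁, ω₂), yc i) ∂P₁) - g (yc i))
          have : d i n ω₂ = |(∫ ω₁, H (X n (ω₁, ω₂), yc i) ∂P₁) - g (yc i)| := rfl
          rw [this]
          linarith
        rw [hρ]
        dsimp only
        linarith
      · have hindc : ((Y n ⁻¹' UU N)ᶜ).indicator (fun _ => (2*‖H‖ : ℝ)) ω₂ = 2*‖H‖ :=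
          Set.indicator_of_mem (show ω₂ ∈ (Y n ⁻¹' UU N)ᶜ from hmem) _
        have hb : |Φ n ω₂ - g (Y n ω₂)| ≤ 2*‖H‖ := by
          have hb1 := hΦbd n ω₂
          have hb2 := hgbd (Y n ω₂)
          rw [Real.norm_eq_abs] at hb1 hb2
          calc |Φ n ω₂ - g (Y n ω₂)| ≤ |Φ n ω₂| + |g (Y n ω₂)| := habs2 _ _
            _ ≤ 2*‖H‖ := by linarith
        rw [hρ]
        dsimp only
        rw [hindc]
        linarith
    -- put the integral bounds together
    have hchain : |∫ ω₂, (Φ n ω₂ - g (Y n ω₂)) ∂P₂| ≤ ∫ ω₂, ρ ω₂ ∂P₂ := by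
      calc |∫ ω₂, (Φ n ω₂ - g (Y n ω₂)) ∂P₂|
          ≤ ∫ ω₂, |Φ n ω₂ - g (Y n ω₂)| ∂P₂ := by
            simpa [Real.norm_eq_abs] using
              norm_integral_le_integral_norm (μ := P₂) (fun ω₂ => Φ n ω₂ - g (Y n ω₂))
        _ ≤ ∫ ω₂, ρ ω₂ ∂P₂ := integral_mono ((intΦ n).sub (intgY n)).abs intρ hpt
    have hρval : ∫ ω₂, ρ ω₂ ∂P₂
        = (∑ i ∈ Finset.range (N+1), ∫ ω₂, (Y n ⁻¹' As i).indicator (d i n) ω₂ ∂P₂)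
          + ((P₂ ((Y n ⁻¹' UU N)ᶜ)).toReal • (2*‖H‖) + 2*(K:ℝ)*ε') := by
      have iA : Integrable (fun ω₂ => ∑ i ∈ Finset.range (N+1),
          (Y n ⁻¹' As i).indicator (d i n) ω₂) P₂ :=
        integrable_finset_sum _ (fun i _ => intind i)
      have iB : Integrable (fun ω₂ =>
          ((Y n ⁻¹' UU N)ᶜ).indicator (fun _ => (2*‖H‖ : ℝ)) ω₂ + 2*(K:ℝ)*ε') P₂ :=
        intind2.add (integrable_const _)
      have iC : Integrable (fun ω₂ =>
          ((Y n ⁻¹' UU N)ᶜ).indicator (fun _ => (2*‖H‖ : ℝ)) ω₂) P₂ := intind2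
      rw [hρ]
      rw [integral_add iA iB, integral_add iC (integrable_const _),
        integral_finset_sum _ (fun i _ => intind i),
        integral_indicator_const _ hUNm.compl, integral_const]
      simp [measure_univ, Measure.real]
    have hsumle : ∑ i ∈ Finset.range (N+1), ∫ ω₂, (Y n ⁻¹' As i).indicator (d i n) ω₂ ∂P₂
        ≤ ∑ i ∈ Finset.range (N+1), ∫ ω₂, d i n ω₂ ∂P₂ := by
      refine Finset.sum_le_sum fun i _ => ?_
      refine integral_mono (intind i) (hint_d i n) ?_
      exact Set.indicator_le_self' (fun x _ => abs_nonneg _)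
    have hcomplle : (P₂ ((Y n ⁻¹' UU N)ᶜ)).toReal • (2*‖H‖) ≤ ε' * (2*‖H‖) := by
      have := h2
      have hnn : (0:ℝ) ≤ 2*‖H‖ := by positivity
      calc (P₂ ((Y n ⁻¹' UU N)ᶜ)).toReal • (2*‖H‖)
          = (P₂ ((Y n ⁻¹' UU N)ᶜ)).toReal * (2*‖H‖) := smul_eq_mul _ _
        _ ≤ ε' * (2*‖H‖) := mul_le_mul_of_nonneg_right h2 hnn
    have hfinal : (2*(K:ℝ) + 2*‖H‖ + 3) * ε' = ε := by
      rw [hε'def]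
      field_simp
    have hKnn : (0:ℝ) ≤ (K:ℝ) := K.coe_nonneg
    have hHnn : (0:ℝ) ≤ ‖H‖ := norm_nonneg _
    calc |∫ ω₂, (Φ n ω₂ - g (Y n ω₂)) ∂P₂| ≤ ∫ ω₂, ρ ω₂ ∂P₂ := hchain
      _ = (∑ i ∈ Finset.range (N+1), ∫ ω₂, (Y n ⁻¹' As i).indicator (d i n) ω₂ ∂P₂)
          + ((P₂ ((Y n ⁻¹' UU N)ᶜ)).toReal • (2*‖H‖) + 2*(K:ℝ)*ε') := hρval
      _ < ε := by nlinarith [hsumle, hcomplle, h1, hε'pos]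
  -- assembly
  have hsplit : ∀ n, ∫ ω₂, Φ n ω₂ ∂P₂
      = (∫ ω₂, (Φ n ω₂ - g (Y n ω₂)) ∂P₂) + ∫ ω₂, g (Y n ω₂) ∂P₂ := fun n => by
    rw [integral_sub (intΦ n) (intgY n)]
    ring
  have : Tendsto (fun n => ∫ ω₂, Φ n ω₂ ∂P₂) atTop (𝓝 (∫ y, g y ∂μY)) := by
    simp only [hsplit]
    simpa using key.add hYG
  rw [hR]
  simpa only [hΦ, ← fub] using this

/-- Composite convergence lemma: if `Yⁿ : Ω₂ → Ω'` converges in distribution under `P₂`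
to (the law of) `Y`, and for every bounded continuous `F`, the partial expectation
`E₁[F(Xⁿ)]` converges `P₂`-a.s. to `E[F(X)]`, then `(Xⁿ, Yⁿ)` converges in distribution
under `P₁ ⊗ P₂` to `(X, Y)` with `X` and `Y` independent (i.e. to the product law). -/
theorem composite_convergence {Ω₁ Ω₂ : Type*} [MeasurableSpace Ω₁] [MeasurableSpace Ω₂]
    (P₁ : Measure Ω₁) (P₂ : Measure Ω₂) [IsProbabilityMeasure P₁] [IsProbabilityMeasure P₂]
    {Ω' : Type*} [MetricSpace Ω'] [TopologicalSpace.SeparableSpace Ω']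
    [MeasurableSpace Ω'] [BorelSpace Ω']
    (X : ℕ → Ω₁ × Ω₂ → Ω') (Y : ℕ → Ω₂ → Ω')
    (hX : ∀ n, Measurable (X n)) (hY : ∀ n, Measurable (Y n))
    (μX μY : Measure Ω') [IsProbabilityMeasure μX] [IsProbabilityMeasure μY]
    (hYconv : ∀ G : Ω' →ᵇ ℝ,
      Tendsto (fun n => ∫ ω₂, G (Y n ω₂) ∂P₂) atTop (𝓝 (∫ y, G y ∂μY)))
    (hXconv : ∀ F : Ω' →ᵇ ℝ, ∀ᵐ ω₂ ∂P₂,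
      Tendsto (fun n => ∫ ω₁, F (X n (ω₁, ω₂)) ∂P₁) atTop (𝓝 (∫ x, F x ∂μX))) :
    ∀ H : (Ω' × Ω') →ᵇ ℝ,
      Tendsto (fun n => ∫ ω, H (X n ω, Y n ω.2) ∂(P₁.prod P₂)) atTop
        (𝓝 (∫ p, H p ∂(μX.prod μY))) := by
  haveI : SecondCountableTopology Ω' := UniformSpace.secondCountable_of_separable Ω'
  set pair : ℕ → Ω₁ × Ω₂ → Ω' × Ω' := fun n ω => (X n ω, Y n ω.2) with hpair
  have hpairm : ∀ n, Measurable (pair n) := fun n =>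
    (hX n).prodMk ((hY n).comp measurable_snd)
  set P : Measure (Ω₁ × Ω₂) := P₁.prod P₂ with hP
  set ν : Measure (Ω' × Ω') := μX.prod μY with hν
  set νs : ℕ → Measure (Ω' × Ω') := fun n => P.map (pair n) with hνs
  haveI : ∀ n, IsProbabilityMeasure (νs n) := fun n =>
    Measure.isProbabilityMeasure_map (hpairm n).aemeasurable
  -- Step A restated for the measures νs
  have stepA' : ∀ (H : (Ω' × Ω') →ᵇ ℝ) (K : ℝ≥0), LipschitzWith K H →
      Tendsto (fun n => ∫ p, H p ∂(νs n)) atTop (𝓝 (∫ p, H p ∂ν)) := by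
    intro H K hK
    have hmap : ∀ n, ∫ p, H p ∂(νs n) = ∫ ω, H (pair n ω) ∂P := fun n =>
      integral_map (hpairm n).aemeasurable H.continuous.aestronglyMeasurable
    simpa only [hmap] using stepA P₁ P₂ X Y hX hY μX μY hYconv hXconv H hK
  -- limsup over closed sets, real-valued version
  have hclosedR : ∀ F : Set (Ω' × Ω'), IsClosed F →
      atTop.limsup (fun n => (νs n F).toReal) ≤ (ν F).toReal := by
    intro F hF
    rcases eq_empty_or_nonempty F with rfl | hFne
    · simp only [measure_empty, ENNReal.toReal_zero]
      have : (fun n : ℕ => ((0:ℝ≥0∞)).toReal) = fun _ => (0:ℝ) := rfl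
      simp [limsup_const]
    -- the Lipschitz approximations
    have hcont : ∀ k : ℕ, Continuous (fun p : Ω' × Ω' =>
        max (1 - (k+1 : ℝ) * infDist p F) 0) := fun k =>
      ((continuous_const.sub (continuous_const.mul (continuous_infDist_pt F))).max
        continuous_const)
    set f : ℕ → (Ω' × Ω') →ᵇ ℝ := fun k =>
      BoundedContinuousFunction.ofNormedAddCommGroup _ (hcont k) 1 (fun p => by
        rw [Real.norm_eq_abs, abs_le]
        constructor
        · have := le_max_right (1 - (k+1 : ℝ) * infDist p F) 0
          linarith
        · apply max_le _ zero_le_one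
          have h1 : 0 ≤ (k+1 : ℝ) * infDist p F :=
            mul_nonneg (by positivity) infDist_nonneg
          linarith [infDist_nonneg (x := p) (s := F)]) with hf
    have hfeq : ∀ k p, f k p = max (1 - (k+1 : ℝ) * infDist p F) 0 := fun k p => rfl
    have hflip : ∀ k : ℕ, LipschitzWith ((k+1 : ℝ≥0)) (f k) := by
      intro k
      refine LipschitzWith.of_dist_le_mul fun p q => ?_
      rw [Real.dist_eq, hfeq, hfeq]
      have h1 : |max (1 - (k+1 : ℝ) * infDist p F) 0 - max (1 - (k+1 : ℝ) * infDist q F) 0|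
          ≤ |(1 - (k+1 : ℝ) * infDist p F) - (1 - (k+1 : ℝ) * infDist q F)| :=
        abs_max_sub_max_le_abs _ _ _
      have h2 : |(1 - (k+1 : ℝ) * infDist p F) - (1 - (k+1 : ℝ) * infDist q F)|
          = (k+1 : ℝ) * |infDist p F - infDist q F| := by
        rw [show (1 - (k+1 : ℝ) * infDist p F) - (1 - (k+1 : ℝ) * infDist q F)
            = (k+1 : ℝ) * (infDist q F - infDist p F) by ring, abs_mul,
          abs_of_nonneg (show (0:ℝ) ≤ (k+1:ℝ) by positivity), abs_sub_comm]
      have h3 : |infDist p F - infDist q F| ≤ dist p q := by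
        have := (lipschitz_infDist_pt F).dist_le_mul p q
        rwa [Real.dist_eq, NNReal.coe_one, one_mul] at this
      have h4 : ((k+1 : ℝ≥0) : ℝ) = (k+1 : ℝ) := by push_cast; ring
      rw [h4]
      calc |max (1 - (k+1 : ℝ) * infDist p F) 0 - max (1 - (k+1 : ℝ) * infDist q F) 0|
          ≤ (k+1 : ℝ) * |infDist p F - infDist q F| := h1.trans_eq h2
        _ ≤ (k+1 : ℝ) * dist p q := by
            have : (0:ℝ) ≤ (k+1:ℝ) := by positivity
            exact mul_le_mul_of_nonneg_left h3 this
    have hf_nonneg : ∀ k p, 0 ≤ f k p := fun k p => le_max_right _ _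
    have hf_le_one : ∀ k p, f k p ≤ 1 := fun k p => by
      rw [hfeq]
      apply max_le _ zero_le_one
      have h1 : 0 ≤ (k+1 : ℝ) * infDist p F :=
        mul_nonneg (by positivity) infDist_nonneg
      linarith
    have hf_one : ∀ k, ∀ p ∈ F, f k p = 1 := fun k p hp => by
      rw [hfeq, infDist_zero_of_mem hp]
      simp
    have hind_le : ∀ k p, F.indicator (fun _ => (1:ℝ)) p ≤ f k p := fun k p => by
      by_cases hp : p ∈ F
      · rw [Set.indicator_of_mem hp, hf_one k p hp]
      · rw [Set.indicator_of_notMem hp]; exact hf_nonneg k p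
    -- pointwise convergence to the indicator
    have hptconv : ∀ p, Tendsto (fun k => f k p) atTop
        (𝓝 (F.indicator (fun _ => (1:ℝ)) p)) := by
      intro p
      by_cases hp : p ∈ F
      · rw [Set.indicator_of_mem hp]
        have : (fun k => f k p) = fun _ => (1:ℝ) := funext fun k => hf_one k p hp
        rw [this]; exact tendsto_const_nhds
      · rw [Set.indicator_of_notMem hp]
        have hdpos : 0 < infDist p F := by
          rcases (infDist_nonneg (x := p) (s := F)).lt_or_eq with h | h
          · exact h
          · exfalso
            apply hp
            rw [← hF.closure_eq]
            exact (mem_closure_iff_infDist_zero hFne).mpr h.symm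
        obtain ⟨k₀, hk₀⟩ := exists_nat_gt (1 / infDist p F)
        apply Tendsto.congr' _ tendsto_const_nhds
        filter_upwards [eventually_ge_atTop k₀] with k hk
        have hk' : (1:ℝ) ≤ (k+1 : ℝ) * infDist p F := by
          have h1 : (1:ℝ) / infDist p F < k + 1 := by
            have : (k₀ : ℝ) ≤ k := Nat.cast_le.mpr hk
            linarith
          rw [div_lt_iff₀ hdpos] at h1
          linarith
        rw [hfeq]
        symm
        apply max_eq_right
        linarith
    -- integral of the indicator
    have hindint : ∀ (m : Measure (Ω' × Ω')) [IsProbabilityMeasure m],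
        ∫ p, F.indicator (fun _ => (1:ℝ)) p ∂m = (m F).toReal := by
      intro m _
      rw [integral_indicator_const _ hF.measurableSet]
      simp [Measure.real]
    have hintind : ∀ n, Integrable (F.indicator (fun _ => (1:ℝ))) (νs n) := fun n =>
      (integrable_const _).indicator hF.measurableSet
    -- limsup ≤ ∫ f k dν for every k
    have hstep : ∀ k, atTop.limsup (fun n => (νs n F).toReal) ≤ ∫ p, f k p ∂ν := by
      intro k
      have hle : ∀ n, (νs n F).toReal ≤ ∫ p, f k p ∂(νs n) := fun n => by
        rw [← hindint (νs n)]
        exact integral_mono (hintind n) ((f k).integrable _) (fun p => hind_le k p)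
      have htend := stepA' (f k) _ (hflip k)
      have hbd : IsBoundedUnder (· ≤ ·) atTop (fun n => ∫ p, f k p ∂(νs n)) :=
        ⟨1, Filter.eventually_map.mpr (Eventually.of_forall fun n => by
          calc ∫ p, f k p ∂(νs n) ≤ ∫ _p, (1:ℝ) ∂(νs n) :=
                integral_mono ((f k).integrable _) (integrable_const _) (hf_le_one k)
            _ = 1 := by simp)⟩
      have hcb : IsCoboundedUnder (· ≤ ·) atTop (fun n => (νs n F).toReal) :=
        IsBoundedUnder.isCoboundedUnder_le
          ⟨0, Filter.eventually_map.mpr (Eventually.of_forall fun n =>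
            ENNReal.toReal_nonneg)⟩
      calc atTop.limsup (fun n => (νs n F).toReal)
          ≤ atTop.limsup (fun n => ∫ p, f k p ∂(νs n)) :=
            limsup_le_limsup (Eventually.of_forall hle) hcb hbd
        _ = ∫ p, f k p ∂ν := htend.limsup_eq
    -- let k → ∞
    have hlim : Tendsto (fun k => ∫ p, f k p ∂ν) atTop (𝓝 ((ν F).toReal)) := by
      have := tendsto_integral_of_dominated_convergence (μ := ν)
        (F := fun k p => f k p) (f := F.indicator (fun _ => (1:ℝ)))
        (bound := fun _ => 1)
        (fun k => (f k).continuous.measurable.aestronglyMeasurable)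
        (integrable_const _)
        (fun k => ae_of_all _ fun p => by
          rw [Real.norm_eq_abs, abs_of_nonneg (hf_nonneg k p)]; exact hf_le_one k p)
        (ae_of_all _ hptconv)
      rwa [hindint ν] at this
    exact ge_of_tendsto' hlim hstep
  -- limsup over closed sets, ℝ≥0∞ version
  have hclosedE : ∀ F : Set (Ω' × Ω'), IsClosed F →
      atTop.limsup (fun n => νs n F) ≤ ν F := by
    intro F hF
    refine ENNReal.le_of_forall_pos_le_add fun δ hδ _ => ?_
    have hbd : IsBoundedUnder (· ≤ ·) atTop (fun n => (νs n F).toReal) :=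
      ⟨1, Filter.eventually_map.mpr (Eventually.of_forall fun n => by
        have := prob_le_one (μ := νs n) (s := F)
        calc (νs n F).toReal ≤ ((1:ℝ≥0∞)).toReal :=
              ENNReal.toReal_mono ENNReal.one_ne_top this
          _ = 1 := by simp)⟩
    have hlt : atTop.limsup (fun n => (νs n F).toReal) < (ν F).toReal + δ :=
      lt_of_le_of_lt (hclosedR F hF) (lt_add_of_pos_right _ (by positivity))
    have hev : ∀ᶠ n in atTop, (νs n F).toReal < (ν F).toReal + δ :=
      eventually_lt_of_limsup_lt hlt hbd
    have hev2 : ∀ᶠ n in atTop, νs n F ≤ ν F + δ := by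
      refine hev.mono fun n hn => ?_
      have h1 : νs n F = ENNReal.ofReal ((νs n F).toReal) :=
        (ENNReal.ofReal_toReal (measure_ne_top _ _)).symm
      rw [h1]
      calc ENNReal.ofReal ((νs n F).toReal) ≤ ENNReal.ofReal ((ν F).toReal + δ) :=
            ENNReal.ofReal_le_ofReal hn.le
        _ = ENNReal.ofReal ((ν F).toReal) + ENNReal.ofReal δ :=
            ENNReal.ofReal_add ENNReal.toReal_nonneg δ.coe_nonneg
        _ = ν F + δ := by
            rw [ENNReal.ofReal_toReal (measure_ne_top _ _), ENNReal.ofReal_coe_nnreal]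
    exact limsup_le_of_le (by isBoundedDefault) hev2
  -- liminf over open sets
  have hopenE : ∀ G : Set (Ω' × Ω'), IsOpen G →
      ν G ≤ atTop.liminf (fun n => νs n G) := fun G hG =>
    le_measure_liminf_of_limsup_measure_compl_le hG.measurableSet
      (hclosedE Gᶜ hG.isClosed_compl)
  -- conclude weak convergence of probability measures
  set νP : ℕ → ProbabilityMeasure (Ω' × Ω') := fun n => ⟨νs n, inferInstance⟩ with hνP
  set νPinf : ProbabilityMeasure (Ω' × Ω') := ⟨ν, inferInstance⟩ with hνPinf
  have htendsto : Tendsto νP atTop (𝓝 νPinf) := by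
    apply MeasureTheory.tendsto_of_forall_isOpen_le_liminf
    intro G hG
    have hop := hopenE G hG
    have aux : (ENNReal.ofNNReal (atTop.liminf fun i => νP i G))
        = atTop.liminf (fun i => ((νP i G : ℝ≥0) : ℝ≥0∞)) := by
      refine Monotone.map_liminf_of_continuousAt (F := atTop) ENNReal.coe_mono
        (fun i => νP i G) ?_ ?_ ?_
      · exact ENNReal.continuous_coe.continuousAt
      · exact IsBoundedUnder.isCoboundedUnder_ge ⟨1, by
          simp only [Filter.eventually_map]
          exact Eventually.of_forall fun i => ProbabilityMeasure.apply_le_one _ _⟩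
      · exact ⟨0, by
          simp only [Filter.eventually_map]
          exact Eventually.of_forall fun i => by positivity⟩
    apply ENNReal.coe_le_coe.mp
    rw [aux]
    have h1 : ∀ i, ((νP i G : ℝ≥0) : ℝ≥0∞) = νs i G := fun i =>
      ProbabilityMeasure.ennreal_coeFn_eq_coeFn_toMeasure _ _
    have h2 : ((νPinf G : ℝ≥0) : ℝ≥0∞) = ν G :=
      ProbabilityMeasure.ennreal_coeFn_eq_coeFn_toMeasure _ _
    rw [h2]
    simpa only [h1] using hop
  -- back to integrals
  intro H
  have hH := ProbabilityMeasure.tendsto_iff_forall_integral_tendsto.mp htendsto H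
  have hH' : Tendsto (fun n => ∫ p, H p ∂(νs n)) atTop (𝓝 (∫ p, H p ∂ν)) := hH
  have hmap : ∀ n, ∫ p, H p ∂(νs n) = ∫ ω, H (pair n ω) ∂P := fun n =>
    integral_map (hpairm n).aemeasurable H.continuous.aestronglyMeasurable
  simpa only [hmap] using hH'
end

section
/- In the setting of Lemma on composite convergence: if Xⁿ and Yⁿ are real-valued, Yⁿ → Y in distribution under P₂, and E₁[F(Xⁿ)] → E[F(X)] P₂-a.s. for all bounded continuous F, then Xⁿ + Yⁿ converges in distribution under P₁⊗P₂ to X + Y where X and Y are independent. -/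
open MeasureTheory ProbabilityTheory Filter Topology BoundedContinuousFunction

/-- Continuous cutoff: `0` on `[-k, k]`, `1` outside `[-(k+1), k+1]`. -/
noncomputable def cutoff (k : ℕ) : ℝ →ᵇ ℝ :=
  BoundedContinuousFunction.ofNormedAddCommGroup (fun t => max 0 (min 1 (|t| - k)))
    (by fun_prop) 1 (fun t => by
      rw [Real.norm_eq_abs, abs_of_nonneg (le_max_left _ _)]
      exact max_le zero_le_one (min_le_left _ _))

lemma cutoff_apply (k : ℕ) (t : ℝ) : cutoff k t = max 0 (min 1 (|t| - k)) := rfl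

lemma cutoff_nonneg (k : ℕ) (t : ℝ) : 0 ≤ cutoff k t := le_max_left _ _

lemma cutoff_le_one (k : ℕ) (t : ℝ) : cutoff k t ≤ 1 := by
  rw [cutoff_apply]; exact max_le zero_le_one (min_le_left _ _)

lemma cutoff_eq_one (k : ℕ) {t : ℝ} (h : (k : ℝ) + 1 ≤ |t|) : cutoff k t = 1 := by
  rw [cutoff_apply, min_eq_left (by linarith), max_eq_right (by linarith)]

lemma cutoff_eq_zero (k : ℕ) {t : ℝ} (h : |t| ≤ k) : cutoff k t = 0 := by
  rw [cutoff_apply, max_eq_left]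
  exact min_le_of_right_le (by linarith)

lemma tendsto_integral_cutoff (μ : Measure ℝ) [IsProbabilityMeasure μ] :
    Tendsto (fun k => ∫ t, cutoff k t ∂μ) atTop (𝓝 0) := by
  have h := tendsto_integral_of_dominated_convergence (μ := μ)
      (F := fun k t => cutoff k t) (f := fun _ => (0 : ℝ)) (bound := fun _ => 1)
      (fun k => ((cutoff k).continuous.measurable).aestronglyMeasurable)
      (integrable_const 1)
      (fun k => Eventually.of_forall fun t => by
        rw [Real.norm_eq_abs, abs_of_nonneg (cutoff_nonneg k t)]; exact cutoff_le_one k t)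
      (Eventually.of_forall fun t => by
        apply tendsto_const_nhds.congr'
        filter_upwards [eventually_ge_atTop ⌈|t|⌉₊] with k hk
        exact (cutoff_eq_zero k ((Nat.le_ceil _).trans (by exact_mod_cast hk))).symm)
  simpa using h

/-- A bounded continuous function composed with a measurable map is integrable. -/
lemma integrable_bcf_comp (G : ℝ →ᵇ ℝ) {α : Type*} [MeasurableSpace α] (ρ : Measure α)
    [IsFiniteMeasure ρ] {W : α → ℝ} (hW : Measurable W) :
    Integrable (fun a => G (W a)) ρ :=
  (integrable_const ‖G‖).mono'
    (G.continuous.measurable.comp hW).aestronglyMeasurable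
    (Eventually.of_forall fun a => G.norm_coe_le_norm (W a))

lemma abs_integral_bcf_le (G : ℝ →ᵇ ℝ) {α : Type*} [MeasurableSpace α] (ρ : Measure α)
    [IsProbabilityMeasure ρ] (W : α → ℝ) :
    |∫ a, G (W a) ∂ρ| ≤ ‖G‖ := by
  have := norm_integral_le_of_norm_le_const (μ := ρ) (f := fun a => G (W a)) (C := ‖G‖)
    (Eventually.of_forall fun a => G.norm_coe_le_norm (W a))
  simpa [Real.norm_eq_abs] using this

/-- Key integral comparison: a pointwise translate estimate integrates. -/
lemma key_int (F φ : ℝ →ᵇ ℝ) {α : Type*} [MeasurableSpace α] (ρ : Measure α)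
    [IsProbabilityMeasure ρ] {W : α → ℝ} (hW : Measurable W) {y q ε c : ℝ}
    (hpt : ∀ t, |F (t + y) - F (t + q)| ≤ ε + c * φ t) :
    |(∫ a, F (W a + y) ∂ρ) - ∫ a, F (W a + q) ∂ρ| ≤ ε + c * ∫ a, φ (W a) ∂ρ := by
  have hy : Integrable (fun a => F (W a + y)) ρ := integrable_bcf_comp F ρ (hW.add_const y)
  have hq : Integrable (fun a => F (W a + q)) ρ := integrable_bcf_comp F ρ (hW.add_const q)
  have hφ : Integrable (fun a => φ (W a)) ρ := integrable_bcf_comp φ ρ hW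
  rw [← integral_sub hy hq]
  calc |∫ a, (F (W a + y) - F (W a + q)) ∂ρ|
      ≤ ∫ a, |F (W a + y) - F (W a + q)| ∂ρ := by
        simpa [Real.norm_eq_abs] using
          norm_integral_le_integral_norm (μ := ρ) (f := fun a => F (W a + y) - F (W a + q))
    _ ≤ ∫ a, (ε + c * φ (W a)) ∂ρ := by
        apply integral_mono ((hy.sub hq).abs) ((integrable_const ε).add (hφ.const_mul c))
        intro a; exact hpt (W a)
    _ = ε + c * ∫ a, φ (W a) ∂ρ := by
        rw [integral_add (integrable_const ε) (hφ.const_mul c), integral_const,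
          MeasureTheory.integral_const_mul]
        simp

set_option maxHeartbeats 1600000 in
/-- Composite convergence, real-valued version: if `Yⁿ → Y` in distribution under `P₂`
and `E₁[F(Xⁿ)] → E[F(X)]` `P₂`-a.s. for every bounded continuous `F`, then
`Xⁿ + Yⁿ` converges in distribution under `P₁ ⊗ P₂` to `X + Y` with `X, Y` independent. -/
theorem composite_convergence_sum {Ω₁ Ω₂ : Type*} [MeasurableSpace Ω₁] [MeasurableSpace Ω₂]
    (P₁ : Measure Ω₁) (P₂ : Measure Ω₂) [IsProbabilityMeasure P₁] [IsProbabilityMeasure P₂]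
    (X : ℕ → Ω₁ × Ω₂ → ℝ) (Y : ℕ → Ω₂ → ℝ)
    (hX : ∀ n, Measurable (X n)) (hY : ∀ n, Measurable (Y n))
    (μX μY : Measure ℝ) [IsProbabilityMeasure μX] [IsProbabilityMeasure μY]
    (hYconv : ∀ G : ℝ →ᵇ ℝ,
      Tendsto (fun n => ∫ ω₂, G (Y n ω₂) ∂P₂) atTop (𝓝 (∫ y, G y ∂μY)))
    (hXconv : ∀ F : ℝ →ᵇ ℝ, ∀ᵐ ω₂ ∂P₂,
      Tendsto (fun n => ∫ ω₁, F (X n (ω₁, ω₂)) ∂P₁) atTop (𝓝 (∫ x, F x ∂μX))) :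
    ∀ F : ℝ →ᵇ ℝ,
      Tendsto (fun n => ∫ ω, F (X n ω + Y n ω.2) ∂(P₁.prod P₂)) atTop
        (𝓝 (∫ p, F (p.1 + p.2) ∂(μX.prod μY))) := by
  intro F
  classical
  -- the function `g y = ∫ F(x+y) dμX` as a bounded continuous function `G`
  have g_cont : Continuous fun y : ℝ => ∫ x, F (x + y) ∂μX := by
    apply continuous_of_dominated (bound := fun _ => ‖F‖)
    · exact fun y =>
        (F.continuous.measurable.comp (measurable_id.add_const y)).aestronglyMeasurable
    · exact fun y => Eventually.of_forall fun x => F.norm_coe_le_norm _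
    · exact integrable_const _
    · exact Eventually.of_forall fun x =>
        F.continuous.comp (continuous_const.add continuous_id)
  set G : ℝ →ᵇ ℝ := BoundedContinuousFunction.ofNormedAddCommGroup
      (fun y => ∫ x, F (x + y) ∂μX) g_cont ‖F‖ (fun y => by
        simpa [Real.norm_eq_abs] using abs_integral_bcf_le F μX (fun x => x + y)) with hGdef
  have hGapp : ∀ y : ℝ, G y = ∫ x, F (x + y) ∂μX := fun y => rfl
  -- the target equals `∫ G dμY`
  have hT : ∫ p, F (p.1 + p.2) ∂(μX.prod μY) = ∫ y, G y ∂μY := by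
    rw [MeasureTheory.integral_prod_symm (fun p : ℝ × ℝ => F (p.1 + p.2))
      (integrable_bcf_comp F _ (measurable_fst.add measurable_snd))]
    simp [hGapp]
  -- Fubini for each `n`
  have hI : ∀ n, ∫ ω, F (X n ω + Y n ω.2) ∂(P₁.prod P₂)
      = ∫ ω₂, (∫ ω₁, F (X n (ω₁, ω₂) + Y n ω₂) ∂P₁) ∂P₂ := fun n =>
    MeasureTheory.integral_prod_symm _
      (integrable_bcf_comp F _ ((hX n).add ((hY n).comp measurable_snd)))
  -- generic measurability of partial integrals
  have measInt : ∀ (H : ℝ →ᵇ ℝ) (Z : Ω₁ × Ω₂ → ℝ), Measurable Z →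
      Measurable fun ω₂ => ∫ ω₁, H (Z (ω₁, ω₂)) ∂P₁ := fun H Z hZ =>
    (MeasureTheory.StronglyMeasurable.integral_prod_left'
      ((H.continuous.measurable.comp hZ).stronglyMeasurable)).measurable
  -- the a.e. good event
  have haeq : ∀ᵐ ω₂ ∂P₂, ∀ q : ℚ,
      Tendsto (fun n => ∫ ω₁, F (X n (ω₁, ω₂) + (q : ℝ)) ∂P₁) atTop
        (𝓝 (∫ x, F (x + (q : ℝ)) ∂μX)) := by
    rw [ae_all_iff]
    intro q
    have := hXconv (F.compContinuous ⟨fun x => x + (q : ℝ), by fun_prop⟩)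
    simpa using this
  have haek : ∀ᵐ ω₂ ∂P₂, ∀ k : ℕ,
      Tendsto (fun n => ∫ ω₁, cutoff k (X n (ω₁, ω₂)) ∂P₁) atTop
        (𝓝 (∫ x, cutoff k x ∂μX)) :=
    ae_all_iff.mpr fun k => hXconv (cutoff k)
  -- the error term tends to zero
  have hE0 : Tendsto
      (fun n => ∫ ω₂, |(∫ ω₁, F (X n (ω₁, ω₂) + Y n ω₂) ∂P₁) - G (Y n ω₂)| ∂P₂)
      atTop (𝓝 0) := by
    rw [NormedAddCommGroup.tendsto_nhds_zero]
    intro ε' hε'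
    have hden : (0:ℝ) < 3 + 8 * ‖F‖ := by positivity
    set ε : ℝ := ε' / (3 + 8 * ‖F‖) with hεdef
    have hεpos : 0 < ε := div_pos hε' hden
    -- choose tail cutoffs
    obtain ⟨K, hK⟩ : ∃ K : ℕ, ∫ x, cutoff K x ∂μX < ε :=
      ((tendsto_integral_cutoff μX).eventually_lt_const hεpos).exists
    obtain ⟨M, hM⟩ : ∃ M : ℕ, ∫ y, cutoff M y ∂μY < ε :=
      ((tendsto_integral_cutoff μY).eventually_lt_const hεpos).exists
    -- uniform continuity of F on a large compact interval
    set R : ℝ := (K : ℝ) + (M : ℝ) + 3 with hRdef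
    have hFuc := (isCompact_Icc (a := -R) (b := R)).uniformContinuousOn_of_continuous
      F.continuous.continuousOn
    rw [Metric.uniformContinuousOn_iff] at hFuc
    obtain ⟨δ₀, hδ₀pos, hδ₀⟩ := hFuc ε hεpos
    set δ : ℝ := min δ₀ 1 with hδdef
    have hδpos : 0 < δ := lt_min hδ₀pos one_pos
    have hδ1 : δ ≤ 1 := min_le_right _ _
    have hδδ₀ : δ ≤ δ₀ := min_le_left _ _
    -- finite rational δ-net of [-(M+1), M+1]
    have hcover : Set.Icc (-((M : ℝ) + 1)) ((M : ℝ) + 1) ⊆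
        ⋃ q : ℚ, Metric.ball ((q : ℝ)) δ := by
      intro y _
      obtain ⟨q, hq⟩ := exists_rat_near y hδpos
      exact Set.mem_iUnion.mpr ⟨q, by
        simpa [Metric.mem_ball, Real.dist_eq] using hq⟩
    obtain ⟨Q, hQ⟩ := isCompact_Icc.elim_finite_subcover
      (fun q : ℚ => Metric.ball ((q : ℝ)) δ) (fun q => Metric.isOpen_ball) hcover
    -- pointwise translate estimate
    have hpt : ∀ y q : ℝ, |y| ≤ (M : ℝ) + 1 → |q| ≤ (M : ℝ) + 2 → dist y q < δ →
        ∀ t, |F (t + y) - F (t + q)| ≤ ε + (2 * ‖F‖) * cutoff K t := by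
      intro y q hy hq hd t
      have hcnn : 0 ≤ (2 * ‖F‖) * cutoff K t :=
        mul_nonneg (by positivity) (cutoff_nonneg _ _)
      by_cases ht : |t| ≤ (K : ℝ) + 1
      · have hty : t + y ∈ Set.Icc (-R) R := by
          rw [Set.mem_Icc, hRdef]
          obtain ⟨h1, h2⟩ := abs_le.mp ht
          obtain ⟨h3, h4⟩ := abs_le.mp hy
          constructor <;> linarith
        have htq : t + q ∈ Set.Icc (-R) R := by
          rw [Set.mem_Icc, hRdef]
          obtain ⟨h1, h2⟩ := abs_le.mp ht
          obtain ⟨h3, h4⟩ := abs_le.mp hq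
          constructor <;> linarith
        have hdist : dist (t + y) (t + q) < δ₀ := by
          rw [Real.dist_eq] at hd ⊢
          calc |t + y - (t + q)| = |y - q| := by ring_nf
            _ < δ := hd
            _ ≤ δ₀ := hδδ₀
        have := hδ₀ _ hty _ htq hdist
        rw [Real.dist_eq] at this
        linarith
      · push_neg at ht
        rw [cutoff_eq_one K ht.le, mul_one]
        have h1 := F.norm_coe_le_norm (t + y)
        have h2 := F.norm_coe_le_norm (t + q)
        rw [Real.norm_eq_abs] at h1 h2
        have := abs_sub (F (t + y)) (F (t + q))
        linarith
    -- abbreviations used below are written out in full each time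
    -- master pointwise bound
    have master : ∀ n ω₂,
        |(∫ ω₁, F (X n (ω₁, ω₂) + Y n ω₂) ∂P₁) - G (Y n ω₂)|
          ≤ (2 * ε + 2 * ‖F‖ * ε)
            + (2 * ‖F‖) * (∫ ω₁, cutoff K (X n (ω₁, ω₂)) ∂P₁)
            + (∑ q ∈ Q, |(∫ ω₁, F (X n (ω₁, ω₂) + (q : ℝ)) ∂P₁) - G ((q : ℝ))|)
            + (2 * ‖F‖) * cutoff M (Y n ω₂) := by
      intro n ω₂
      have hW : Measurable fun ω₁ => X n (ω₁, ω₂) :=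
        (hX n).comp (measurable_id.prodMk measurable_const)
      have hRnn : (0:ℝ) ≤ ∫ ω₁, cutoff K (X n (ω₁, ω₂)) ∂P₁ :=
        integral_nonneg fun ω₁ => cutoff_nonneg _ _
      have hDnn : (0:ℝ) ≤ ∑ q ∈ Q, |(∫ ω₁, F (X n (ω₁, ω₂) + (q : ℝ)) ∂P₁) - G ((q : ℝ))| :=
        Finset.sum_nonneg fun _ _ => abs_nonneg _
      have hcutnn : (0:ℝ) ≤ cutoff M (Y n ω₂) := cutoff_nonneg _ _
      by_cases hy : |Y n ω₂| ≤ (M : ℝ) + 1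
      · -- find a close rational
        have hmem : Y n ω₂ ∈ ⋃ q ∈ Q, Metric.ball ((q : ℝ)) δ :=
          hQ (Set.mem_Icc.mpr (abs_le.mp hy))
        obtain ⟨q, hqQ, hqball⟩ := Set.mem_iUnion₂.mp hmem
        have hqy : dist (Y n ω₂) (q : ℝ) < δ := Metric.mem_ball.mp hqball
        have hqabs : |(q : ℝ)| ≤ (M : ℝ) + 2 := by
          have h1 : |(q : ℝ)| ≤ |Y n ω₂| + |Y n ω₂ - q| := by
            have := abs_sub_abs_le_abs_sub (q : ℝ) (Y n ω₂)
            have := abs_sub_comm (Y n ω₂) (q : ℝ)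
            calc |(q : ℝ)| ≤ |Y n ω₂| + |(q : ℝ) - Y n ω₂| := by
                  have := abs_add_le (Y n ω₂) ((q : ℝ) - Y n ω₂)
                  simpa using this
              _ = |Y n ω₂| + |Y n ω₂ - q| := by rw [abs_sub_comm]
          have h2 : |Y n ω₂ - q| < δ := by rwa [Real.dist_eq] at hqy
          linarith [hδ1]
        have hptq := hpt (Y n ω₂) (q : ℝ) hy hqabs hqy
        have t1 : |(∫ ω₁, F (X n (ω₁, ω₂) + Y n ω₂) ∂P₁)
            - ∫ ω₁, F (X n (ω₁, ω₂) + (q : ℝ)) ∂P₁|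
            ≤ ε + (2 * ‖F‖) * ∫ ω₁, cutoff K (X n (ω₁, ω₂)) ∂P₁ :=
          key_int F (cutoff K) P₁ hW hptq
        have t2 : |G (Y n ω₂) - G ((q : ℝ))|
            ≤ ε + (2 * ‖F‖) * ∫ x, cutoff K x ∂μX := by
          have := key_int F (cutoff K) μX (W := id) measurable_id hptq
          simpa [hGapp] using this
        have t3 : |(∫ ω₁, F (X n (ω₁, ω₂) + (q : ℝ)) ∂P₁) - G ((q : ℝ))|
            ≤ ∑ q ∈ Q, |(∫ ω₁, F (X n (ω₁, ω₂) + (q : ℝ)) ∂P₁) - G ((q : ℝ))| :=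
          Finset.single_le_sum (f := fun q : ℚ =>
            |(∫ ω₁, F (X n (ω₁, ω₂) + (q : ℝ)) ∂P₁) - G ((q : ℝ))|)
            (fun _ _ => abs_nonneg _) hqQ
        have htri : |(∫ ω₁, F (X n (ω₁, ω₂) + Y n ω₂) ∂P₁) - G (Y n ω₂)|
            ≤ |(∫ ω₁, F (X n (ω₁, ω₂) + Y n ω₂) ∂P₁)
                - ∫ ω₁, F (X n (ω₁, ω₂) + (q : ℝ)) ∂P₁|
              + |(∫ ω₁, F (X n (ω₁, ω₂) + (q : ℝ)) ∂P₁) - G ((q : ℝ))|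
              + |G (Y n ω₂) - G ((q : ℝ))| := by
          have := abs_sub_le (∫ ω₁, F (X n (ω₁, ω₂) + Y n ω₂) ∂P₁)
            (∫ ω₁, F (X n (ω₁, ω₂) + (q : ℝ)) ∂P₁) (G (Y n ω₂))
          have h4 := abs_sub_comm (G ((q : ℝ))) (G (Y n ω₂))
          have h5 := abs_sub_le (∫ ω₁, F (X n (ω₁, ω₂) + (q : ℝ)) ∂P₁)
            (G ((q : ℝ))) (G (Y n ω₂))
          linarith
        have hmul : (2 * ‖F‖) * (∫ x, cutoff K x ∂μX) ≤ (2 * ‖F‖) * ε :=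
          mul_le_mul_of_nonneg_left hK.le (by positivity)
        have hcut2 : (0:ℝ) ≤ (2 * ‖F‖) * cutoff M (Y n ω₂) :=
          mul_nonneg (by positivity) hcutnn
        linarith
      · push_neg at hy
        rw [cutoff_eq_one M hy.le]
        have h2 : |∫ ω₁, F (X n (ω₁, ω₂) + Y n ω₂) ∂P₁| ≤ ‖F‖ :=
          abs_integral_bcf_le F P₁ _
        have h3 : |G (Y n ω₂)| ≤ ‖F‖ := by
          have := abs_integral_bcf_le F μX (fun x => x + Y n ω₂)
          simpa [hGapp] using this
        have := abs_sub (∫ ω₁, F (X n (ω₁, ω₂) + Y n ω₂) ∂P₁) (G (Y n ω₂))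
        have hε2 : (0:ℝ) ≤ 2 * ε + 2 * ‖F‖ * ε := by positivity
        have h2F : (0:ℝ) ≤ 2 * ‖F‖ := by positivity
        nlinarith
    -- integrability of all pieces (for fixed n)
    have measA : ∀ n, Measurable fun ω₂ => ∫ ω₁, F (X n (ω₁, ω₂) + Y n ω₂) ∂P₁ := fun n =>
      measInt F (fun p => X n p + Y n p.2) ((hX n).add ((hY n).comp measurable_snd))
    have measAq : ∀ n (q : ℚ), Measurable fun ω₂ => ∫ ω₁, F (X n (ω₁, ω₂) + (q : ℝ)) ∂P₁ :=
      fun n q => measInt F (fun p => X n p + (q : ℝ)) ((hX n).add_const _)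
    have measR : ∀ n, Measurable fun ω₂ => ∫ ω₁, cutoff K (X n (ω₁, ω₂)) ∂P₁ := fun n =>
      measInt (cutoff K) (X n) (hX n)
    have intg1 : ∀ n, Integrable
        (fun ω₂ => |(∫ ω₁, F (X n (ω₁, ω₂) + Y n ω₂) ∂P₁) - G (Y n ω₂)|) P₂ := fun n => by
      apply (integrable_const (2 * ‖F‖)).mono'
        (((measA n).sub (G.continuous.measurable.comp' (hY n))).abs).aestronglyMeasurable
      apply Eventually.of_forall
      intro ω₂
      rw [Real.norm_eq_abs, abs_abs]
      have h2 := abs_integral_bcf_le F P₁ (fun ω₁ => X n (ω₁, ω₂) + Y n ω₂)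
      have h3 : |G (Y n ω₂)| ≤ ‖F‖ := by
        simpa [hGapp] using abs_integral_bcf_le F μX (fun x => x + Y n ω₂)
      have := abs_sub (∫ ω₁, F (X n (ω₁, ω₂) + Y n ω₂) ∂P₁) (G (Y n ω₂))
      simp only [Pi.sub_apply]
      linarith
    have intgR : ∀ n, Integrable (fun ω₂ => ∫ ω₁, cutoff K (X n (ω₁, ω₂)) ∂P₁) P₂ := fun n => by
      apply (integrable_const ‖cutoff K‖).mono' (measR n).aestronglyMeasurable
      apply Eventually.of_forall
      intro ω₂
      rw [Real.norm_eq_abs]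
      exact abs_integral_bcf_le (cutoff K) P₁ (fun ω₁ => X n (ω₁, ω₂))
    have intgDq : ∀ n (q : ℚ), Integrable
        (fun ω₂ => |(∫ ω₁, F (X n (ω₁, ω₂) + (q : ℝ)) ∂P₁) - G ((q : ℝ))|) P₂ := fun n q => by
      apply (integrable_const (2 * ‖F‖)).mono'
        (((measAq n q).sub measurable_const).abs).aestronglyMeasurable
      apply Eventually.of_forall
      intro ω₂
      rw [Real.norm_eq_abs, abs_abs]
      have h2 := abs_integral_bcf_le F P₁ (fun ω₁ => X n (ω₁, ω₂) + (q : ℝ))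
      have h3 : |G ((q : ℝ))| ≤ ‖F‖ := by
        simpa [hGapp] using abs_integral_bcf_le F μX (fun x => x + (q : ℝ))
      have := abs_sub (∫ ω₁, F (X n (ω₁, ω₂) + (q : ℝ)) ∂P₁) (G ((q : ℝ)))
      simp only [Pi.sub_apply]
      linarith
    have intgD : ∀ n, Integrable
        (fun ω₂ => ∑ q ∈ Q, |(∫ ω₁, F (X n (ω₁, ω₂) + (q : ℝ)) ∂P₁) - G ((q : ℝ))|) P₂ :=
      fun n => integrable_finset_sum Q (fun q _ => intgDq n q)
    have intgcut : ∀ n, Integrable (fun ω₂ => cutoff M (Y n ω₂)) P₂ := fun n =>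
      integrable_bcf_comp (cutoff M) P₂ (hY n)
    -- define S n and show E n ≤ S n
    have hEleS : ∀ n,
        (∫ ω₂, |(∫ ω₁, F (X n (ω₁, ω₂) + Y n ω₂) ∂P₁) - G (Y n ω₂)| ∂P₂)
        ≤ (2 * ε + 2 * ‖F‖ * ε)
          + (2 * ‖F‖) * (∫ ω₂, (∫ ω₁, cutoff K (X n (ω₁, ω₂)) ∂P₁) ∂P₂)
          + (∫ ω₂, (∑ q ∈ Q, |(∫ ω₁, F (X n (ω₁, ω₂) + (q : ℝ)) ∂P₁) - G ((q : ℝ))|) ∂P₂)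
          + (2 * ‖F‖) * (∫ ω₂, cutoff M (Y n ω₂) ∂P₂) := by
      intro n
      have step : (∫ ω₂, |(∫ ω₁, F (X n (ω₁, ω₂) + Y n ω₂) ∂P₁) - G (Y n ω₂)| ∂P₂)
          ≤ ∫ ω₂, ((2 * ε + 2 * ‖F‖ * ε)
            + (2 * ‖F‖) * (∫ ω₁, cutoff K (X n (ω₁, ω₂)) ∂P₁)
            + (∑ q ∈ Q, |(∫ ω₁, F (X n (ω₁, ω₂) + (q : ℝ)) ∂P₁) - G ((q : ℝ))|)
            + (2 * ‖F‖) * cutoff M (Y n ω₂)) ∂P₂ := by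
        apply integral_mono (intg1 n)
        · exact ((((integrable_const _).add ((intgR n).const_mul _)).add (intgD n)).add
            ((intgcut n).const_mul _))
        · exact master n
      have i1 : (∫ ω₂, ((2 * ε + 2 * ‖F‖ * ε)
            + (2 * ‖F‖) * (∫ ω₁, cutoff K (X n (ω₁, ω₂)) ∂P₁)
            + (∑ q ∈ Q, |(∫ ω₁, F (X n (ω₁, ω₂) + (q : ℝ)) ∂P₁) - G ((q : ℝ))|)
            + (2 * ‖F‖) * cutoff M (Y n ω₂)) ∂P₂)
          = (∫ ω₂, ((2 * ε + 2 * ‖F‖ * ε)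
            + (2 * ‖F‖) * (∫ ω₁, cutoff K (X n (ω₁, ω₂)) ∂P₁)
            + (∑ q ∈ Q, |(∫ ω₁, F (X n (ω₁, ω₂) + (q : ℝ)) ∂P₁) - G ((q : ℝ))|)) ∂P₂)
            + ∫ ω₂, (2 * ‖F‖) * cutoff M (Y n ω₂) ∂P₂ :=
        integral_add (((integrable_const _).add ((intgR n).const_mul _)).add (intgD n))
          ((intgcut n).const_mul _)
      have i2 : (∫ ω₂, ((2 * ε + 2 * ‖F‖ * ε)
            + (2 * ‖F‖) * (∫ ω₁, cutoff K (X n (ω₁, ω₂)) ∂P₁)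
            + (∑ q ∈ Q, |(∫ ω₁, F (X n (ω₁, ω₂) + (q : ℝ)) ∂P₁) - G ((q : ℝ))|)) ∂P₂)
          = (∫ ω₂, ((2 * ε + 2 * ‖F‖ * ε)
            + (2 * ‖F‖) * (∫ ω₁, cutoff K (X n (ω₁, ω₂)) ∂P₁)) ∂P₂)
            + ∫ ω₂, (∑ q ∈ Q, |(∫ ω₁, F (X n (ω₁, ω₂) + (q : ℝ)) ∂P₁) - G ((q : ℝ))|) ∂P₂ :=
        integral_add ((integrable_const _).add ((intgR n).const_mul _)) (intgD n)
      have i3 : (∫ ω₂, ((2 * ε + 2 * ‖F‖ * ε)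
            + (2 * ‖F‖) * (∫ ω₁, cutoff K (X n (ω₁, ω₂)) ∂P₁)) ∂P₂)
          = (∫ _ω₂, (2 * ε + 2 * ‖F‖ * ε) ∂P₂)
            + ∫ ω₂, (2 * ‖F‖) * (∫ ω₁, cutoff K (X n (ω₁, ω₂)) ∂P₁) ∂P₂ :=
        integral_add (integrable_const _) ((intgR n).const_mul _)
      calc (∫ ω₂, |(∫ ω₁, F (X n (ω₁, ω₂) + Y n ω₂) ∂P₁) - G (Y n ω₂)| ∂P₂)
          ≤ _ := step
        _ = _ := by
          rw [i1, i2, i3, integral_const, MeasureTheory.integral_const_mul,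
            MeasureTheory.integral_const_mul]
          simp
    -- limits of the three variable pieces
    have limR : Tendsto (fun n => ∫ ω₂, (∫ ω₁, cutoff K (X n (ω₁, ω₂)) ∂P₁) ∂P₂)
        atTop (𝓝 (∫ x, cutoff K x ∂μX)) := by
      have h := tendsto_integral_of_dominated_convergence (μ := P₂)
        (F := fun n ω₂ => ∫ ω₁, cutoff K (X n (ω₁, ω₂)) ∂P₁)
        (f := fun _ => ∫ x, cutoff K x ∂μX) (bound := fun _ => ‖cutoff K‖)
        (fun n => (measR n).aestronglyMeasurable)
        (integrable_const _)
        (fun n => Eventually.of_forall fun ω₂ => by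
          rw [Real.norm_eq_abs]
          exact abs_integral_bcf_le (cutoff K) P₁ (fun ω₁ => X n (ω₁, ω₂)))
        (by filter_upwards [haek] with ω₂ h using h K)
      simpa using h
    have limD : Tendsto
        (fun n => ∫ ω₂, (∑ q ∈ Q, |(∫ ω₁, F (X n (ω₁, ω₂) + (q : ℝ)) ∂P₁) - G ((q : ℝ))|) ∂P₂)
        atTop (𝓝 0) := by
      have h := tendsto_integral_of_dominated_convergence (μ := P₂)
        (F := fun n ω₂ => ∑ q ∈ Q, |(∫ ω₁, F (X n (ω₁, ω₂) + (q : ℝ)) ∂P₁) - G ((q : ℝ))|)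
        (f := fun _ => (0:ℝ)) (bound := fun _ => (Q.card : ℝ) * (2 * ‖F‖))
        (fun n => (Finset.measurable_sum Q fun q _ =>
          ((measAq n q).sub measurable_const).abs).aestronglyMeasurable)
        (integrable_const _)
        (fun n => Eventually.of_forall fun ω₂ => by
          rw [Real.norm_eq_abs, abs_of_nonneg (Finset.sum_nonneg fun _ _ => abs_nonneg _)]
          have : ∀ q ∈ Q, |(∫ ω₁, F (X n (ω₁, ω₂) + (q : ℝ)) ∂P₁) - G ((q : ℝ))| ≤ 2 * ‖F‖ := by
            intro q _
            have h2 := abs_integral_bcf_le F P₁ (fun ω₁ => X n (ω₁, ω₂) + (q : ℝ))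
            have h3 : |G ((q : ℝ))| ≤ ‖F‖ := by
              simpa [hGapp] using abs_integral_bcf_le F μX (fun x => x + (q : ℝ))
            have := abs_sub (∫ ω₁, F (X n (ω₁, ω₂) + (q : ℝ)) ∂P₁) (G ((q : ℝ)))
            linarith
          calc (∑ q ∈ Q, |(∫ ω₁, F (X n (ω₁, ω₂) + (q : ℝ)) ∂P₁) - G ((q : ℝ))|)
              ≤ ∑ _q ∈ Q, 2 * ‖F‖ := Finset.sum_le_sum this
            _ = (Q.card : ℝ) * (2 * ‖F‖) := by
              rw [Finset.sum_const, nsmul_eq_mul])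
        (by
          filter_upwards [haeq] with ω₂ h
          have : Tendsto (fun n =>
              ∑ q ∈ Q, |(∫ ω₁, F (X n (ω₁, ω₂) + (q : ℝ)) ∂P₁) - G ((q : ℝ))|) atTop
              (𝓝 (∑ q ∈ Q, (0:ℝ))) := by
            apply tendsto_finset_sum
            intro q _
            have h0 := (h q).sub (tendsto_const_nhds (x := G ((q : ℝ))))
            have h1 : (∫ x, F (x + (q : ℝ)) ∂μX) - G ((q : ℝ)) = 0 := by
              rw [hGapp]; ring
            rw [h1] at h0
            simpa using h0.abs
          simpa using this)
      simpa using h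
    have limcut : Tendsto (fun n => ∫ ω₂, cutoff M (Y n ω₂) ∂P₂)
        atTop (𝓝 (∫ y, cutoff M y ∂μY)) := hYconv (cutoff M)
    -- combine: S n tends to L < ε'
    have limS : Tendsto (fun n =>
        (2 * ε + 2 * ‖F‖ * ε)
          + (2 * ‖F‖) * (∫ ω₂, (∫ ω₁, cutoff K (X n (ω₁, ω₂)) ∂P₁) ∂P₂)
          + (∫ ω₂, (∑ q ∈ Q, |(∫ ω₁, F (X n (ω₁, ω₂) + (q : ℝ)) ∂P₁) - G ((q : ℝ))|) ∂P₂)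
          + (2 * ‖F‖) * (∫ ω₂, cutoff M (Y n ω₂) ∂P₂)) atTop
        (𝓝 ((2 * ε + 2 * ‖F‖ * ε) + (2 * ‖F‖) * (∫ x, cutoff K x ∂μX) + 0
          + (2 * ‖F‖) * (∫ y, cutoff M y ∂μY))) := by
      exact ((tendsto_const_nhds.add (limR.const_mul _)).add limD).add (limcut.const_mul _)
    have hL : (2 * ε + 2 * ‖F‖ * ε) + (2 * ‖F‖) * (∫ x, cutoff K x ∂μX) + 0
        + (2 * ‖F‖) * (∫ y, cutoff M y ∂μY) < ε' := by
      have hεε' : (3 + 8 * ‖F‖) * ε = ε' := by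
        rw [hεdef]; field_simp
      have hcK : (2 * ‖F‖) * (∫ x, cutoff K x ∂μX) ≤ (2 * ‖F‖) * ε :=
        mul_le_mul_of_nonneg_left hK.le (by positivity)
      have hcM : (2 * ‖F‖) * (∫ y, cutoff M y ∂μY) ≤ (2 * ‖F‖) * ε :=
        mul_le_mul_of_nonneg_left hM.le (by positivity)
      have hFnn : (0:ℝ) ≤ ‖F‖ := norm_nonneg _
      nlinarith
    filter_upwards [limS.eventually_lt_const hL] with n hn
    have hEn := hEleS n
    have hE0n : (0:ℝ) ≤ ∫ ω₂, |(∫ ω₁, F (X n (ω₁, ω₂) + Y n ω₂) ∂P₁) - G (Y n ω₂)| ∂P₂ :=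
      integral_nonneg fun _ => abs_nonneg _
    rw [Real.norm_eq_abs, abs_of_nonneg hE0n]
    linarith
  -- conclude
  have intgA : ∀ n, Integrable (fun ω₂ => ∫ ω₁, F (X n (ω₁, ω₂) + Y n ω₂) ∂P₁) P₂ := fun n =>
    (integrable_const ‖F‖).mono'
      ((measInt F (fun p => X n p + Y n p.2)
        ((hX n).add ((hY n).comp measurable_snd))).aestronglyMeasurable)
      (Eventually.of_forall fun ω₂ => by
        rw [Real.norm_eq_abs]
        exact abs_integral_bcf_le F P₁ (fun ω₁ => X n (ω₁, ω₂) + Y n ω₂))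
  have intgG : ∀ n, Integrable (fun ω₂ => G (Y n ω₂)) P₂ := fun n =>
    integrable_bcf_comp G P₂ (hY n)
  have hdiff : ∀ n,
      ‖(∫ ω₂, (∫ ω₁, F (X n (ω₁, ω₂) + Y n ω₂) ∂P₁) ∂P₂) - ∫ ω₂, G (Y n ω₂) ∂P₂‖
        ≤ ∫ ω₂, |(∫ ω₁, F (X n (ω₁, ω₂) + Y n ω₂) ∂P₁) - G (Y n ω₂)| ∂P₂ := fun n => by
    rw [← integral_sub (intgA n) (intgG n)]
    simpa [Real.norm_eq_abs] using norm_integral_le_integral_norm (μ := P₂)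
      (f := fun ω₂ => (∫ ω₁, F (X n (ω₁, ω₂) + Y n ω₂) ∂P₁) - G (Y n ω₂))
  have h1 : Tendsto (fun n =>
      (∫ ω₂, (∫ ω₁, F (X n (ω₁, ω₂) + Y n ω₂) ∂P₁) ∂P₂) - ∫ ω₂, G (Y n ω₂) ∂P₂)
      atTop (𝓝 0) := squeeze_zero_norm hdiff hE0
  have h3 : Tendsto (fun n => ∫ ω₂, (∫ ω₁, F (X n (ω₁, ω₂) + Y n ω₂) ∂P₁) ∂P₂)
      atTop (𝓝 (∫ y, G y ∂μY)) := by
    have := h1.add (hYconv G)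
    simpa using this
  rw [hT]
  exact h3.congr fun n => (hI n).symm
end
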